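/- Let G be a finite group with O_{p'}(G) = 1 such that E(G) is nontrivial and F(G) = Soc(G). Then for every component H of G, p divides |H/Z(H)| and the Sylow p-subgroups of H/Z(H) are non-cyclic. -/

import Mathlib

open Subgroup
open scoped commutatorElement IsMulCommutative

/-- `H` is a subnormal subgroup of `G`. -/
def IsSubnormal {G : Type*} [Group G] (H : Subgroup G) : Prop :=
  ∃ (n : ℕ) (σ : Fin (n + 1) → Subgroup G), σ 0 = H ∧ σ (Fin.last n) = ⊤ ∧
    ∀ i : Fin n, σ i.castSucc ≤ σ i.succ ∧ ((σ i.castSucc).subgroupOf (σ i.succ)).Normal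

/-- `H` is quasisimple: `H` is perfect and `H/Z(H)` is simple. -/
def IsQuasisimple {G : Type*} [Group G] (H : Subgroup G) : Prop :=
  ⁅H, H⁆ = H ∧ IsSimpleGroup (↥H ⧸ Subgroup.center ↥H)

/-- A component of `G` is a subnormal quasisimple subgroup. -/
def IsComponent {G : Type*} [Group G] (H : Subgroup G) : Prop :=
  _root_.IsSubnormal H ∧ IsQuasisimple H

/-- The Fitting subgroup `F(G)`: the join of all nilpotent normal subgroups. -/
def fittingSubgroup (G : Type*) [Group G] : Subgroup G :=
  ⨆ N ∈ {N : Subgroup G | N.Normal ∧ Group.IsNilpotent ↥N}, N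

/-- The socle `Soc(G)`: the join of all minimal normal subgroups. -/
def socle (G : Type*) [Group G] : Subgroup G :=
  ⨆ N ∈ {N : Subgroup G | N.Normal ∧ N ≠ ⊥ ∧
    ∀ M : Subgroup G, M.Normal → M ≤ N → M = ⊥ ∨ M = N}, N


section Machinery

variable {G : Type*} [Group G]

/-- Elementwise commutation of two subgroups. -/
def ElCom (A B : Subgroup G) : Prop := ∀ a ∈ A, ∀ b ∈ B, a * b = b * a

lemma ElCom.symm {A B : Subgroup G} (h : ElCom A B) : ElCom B A :=
  fun b hb a ha => (h a ha b hb).symm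

lemma ElCom.mono {A B A' B' : Subgroup G} (h : ElCom A B) (hA : A' ≤ A) (hB : B' ≤ B) :
    ElCom A' B' := fun a ha b hb => h a (hA ha) b (hB hb)

lemma ElCom.commutator_eq_bot {A B : Subgroup G} (h : ElCom A B) : ⁅A, B⁆ = ⊥ :=
  Subgroup.commutator_eq_bot_iff_le_centralizer.mpr fun a ha =>
    Subgroup.mem_centralizer_iff.mpr fun b hb => (h a ha b hb).symm

lemma elCom_of_commutator_eq_bot {A B : Subgroup G} (h : ⁅A, B⁆ = ⊥) : ElCom A B :=
  fun a ha b hb =>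
    (Subgroup.mem_centralizer_iff.mp
      (Subgroup.commutator_eq_bot_iff_le_centralizer.mp h ha) b hb).symm

/-- `A` is a normal subgroup of `B` (elementwise formulation). -/
def IsNormalIn (A B : Subgroup G) : Prop :=
  A ≤ B ∧ ∀ b ∈ B, ∀ a ∈ A, b * a * b⁻¹ ∈ A

/-- Subnormal chains, as a relation between subgroups of the ambient group. -/
inductive SN : Subgroup G → Subgroup G → Prop
  | refl (T : Subgroup G) : SN T T
  | step {A B T : Subgroup G} : SN A B → IsNormalIn B T → SN A T

lemma SN.le {A B : Subgroup G} (h : SN A B) : A ≤ B := by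
  induction h with
  | refl => exact le_rfl
  | step h hn ih => exact ih.trans hn.1

lemma SN.inf {A B : Subgroup G} (L : Subgroup G) (h : SN A B) : SN (A ⊓ L) (B ⊓ L) := by
  induction h with
  | refl => exact SN.refl _
  | step h hn ih =>
      exact SN.step ih ⟨inf_le_inf_right L hn.1, fun t ht a ha =>
        ⟨hn.2 t ht.1 a ha.1, L.mul_mem (L.mul_mem ht.2 ha.2) (L.inv_mem ht.2)⟩⟩

lemma isNormalIn_of_subgroupOf_normal {A B : Subgroup G} (hle : A ≤ B)
    (h : (A.subgroupOf B).Normal) : IsNormalIn A B := by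
  refine ⟨hle, fun b hb a ha => ?_⟩
  have key := h.conj_mem ⟨a, hle ha⟩
    (by simpa [Subgroup.mem_subgroupOf] using ha) ⟨b, hb⟩
  simpa [Subgroup.mem_subgroupOf] using key

lemma IsSubnormal.sn {H : Subgroup G} (h : _root_.IsSubnormal H) : SN H (⊤ : Subgroup G) := by
  obtain ⟨n, σ, h0, hl, hc⟩ := h
  suffices key : ∀ (m : ℕ) (σ : Fin (m + 1) → Subgroup G),
      (∀ i : Fin m, σ i.castSucc ≤ σ i.succ ∧ ((σ i.castSucc).subgroupOf (σ i.succ)).Normal) →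
      SN (σ 0) (σ (Fin.last m)) by
    have := key n σ hc
    rw [h0, hl] at this
    exact this
  intro m
  induction m with
  | zero => intro σ _; exact SN.refl _
  | succ k ih =>
      intro σ hσ
      have h1 : SN (σ (0 : Fin (k + 1)).castSucc) (σ (Fin.last k).castSucc) := by
        refine ih (fun i => σ i.castSucc) (fun i => ?_)
        have := hσ i.castSucc
        rwa [Fin.succ_castSucc] at this
      have h2 := hσ (Fin.last k)
      rw [Fin.succ_last] at h2
      exact SN.step (by simpa using h1) (isNormalIn_of_subgroupOf_normal h2.1 h2.2)

end Machinery
section Machinery2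
open Pointwise

variable {G : Type*} [Group G]

/-- The properties of quasisimple groups needed for component theory. -/
structure QS (H : Subgroup G) : Prop where
  ne_bot : H ≠ ⊥
  perfect : ⁅H, H⁆ = H
  cases' : ∀ N : Subgroup G, IsNormalIn N H → ElCom N H ∨ H ≤ N

lemma QS.not_elcom_self {H : Subgroup G} (hq : QS H) (h : ElCom H H) : False :=
  hq.ne_bot (by rw [← hq.perfect, h.commutator_eq_bot])

lemma perfect_top_of_perfect {H : Subgroup G} (hperf : ⁅H, H⁆ = H) :
    ⁅(⊤ : Subgroup ↥H), (⊤ : Subgroup ↥H)⁆ = (⊤ : Subgroup ↥H) := by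
  apply Subgroup.map_injective H.subtype_injective
  have h1 : Subgroup.map H.subtype (⊤ : Subgroup ↥H) = H := by
    rw [← MonoidHom.range_eq_map, Subgroup.range_subtype]
  rw [Subgroup.map_commutator, h1, hperf]

lemma IsQuasisimple.qs {H : Subgroup G} (h : IsQuasisimple H) : QS H := by
  obtain ⟨hperf, hsimple⟩ := h
  have hne : H ≠ ⊥ := by
    intro hbot
    subst hbot
    have hall : ∀ a : ↥(⊥ : Subgroup G), a = 1 := fun a =>
      Subtype.ext (Subgroup.mem_bot.mp a.2)
    obtain ⟨x, y, hxy⟩ := hsimple.exists_pair_ne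
    apply hxy
    induction x using QuotientGroup.induction_on with | H a =>
    induction y using QuotientGroup.induction_on with | H b =>
    rw [hall a, hall b]
  refine ⟨hne, hperf, fun N hN => ?_⟩
  set Z := Subgroup.center ↥H with hZ
  set N' : Subgroup ↥H := N.subgroupOf H with hNdef
  haveI hNn : N'.Normal := by
    constructor
    rintro ⟨n, hnH⟩ hn ⟨b, hbH⟩
    simp only [hNdef, Subgroup.mem_subgroupOf] at hn ⊢
    exact hN.2 b hbH n hn
  haveI hmap : ((N'.map (QuotientGroup.mk' Z)) : Subgroup (↥H ⧸ Z)).Normal :=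
    hNn.map _ (QuotientGroup.mk'_surjective Z)
  rcases hmap.eq_bot_or_eq_top with hbot | htop
  · left
    have hle : N' ≤ Z := by
      have := (Subgroup.map_eq_bot_iff _).mp hbot
      rwa [QuotientGroup.ker_mk'] at this
    intro n hn b hb
    have hmem : (⟨n, hN.1 hn⟩ : ↥H) ∈ Z := hle (by
      simp only [hNdef, Subgroup.mem_subgroupOf]; exact hn)
    have := Subgroup.mem_center_iff.mp hmem ⟨b, hb⟩
    have := Subtype.ext_iff.mp this
    simpa using this.symm
  · right
    have hsup : N' ⊔ Z = ⊤ := by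
      have := congrArg (Subgroup.comap (QuotientGroup.mk' Z)) htop
      rwa [Subgroup.comap_map_eq, QuotientGroup.ker_mk', Subgroup.comap_top] at this
    have hrep : ∀ a : ↥H, ∃ z ∈ Z, (QuotientGroup.mk a : ↥H ⧸ N') = QuotientGroup.mk z := by
      intro a
      have ha : a ∈ ((N' : Set ↥H) * (Z : Set ↥H)) := by
        rw [← Subgroup.mul_normal N' Z]
        exact SetLike.mem_coe.mpr (hsup ▸ Subgroup.mem_top a)
      obtain ⟨n, hn, z, hz, rfl⟩ := ha
      refine ⟨z, hz, ?_⟩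
      have : (QuotientGroup.mk n : ↥H ⧸ N') = 1 := (QuotientGroup.eq_one_iff n).mpr hn
      rw [QuotientGroup.mk_mul, this, one_mul]
    have hcomm : ∀ x y : (↥H ⧸ N'), x * y = y * x := by
      intro x y
      induction x using QuotientGroup.induction_on with | H a =>
      induction y using QuotientGroup.induction_on with | H b =>
      obtain ⟨z, hz, hza⟩ := hrep a
      obtain ⟨w, hw, hwb⟩ := hrep b
      rw [hza, hwb, ← QuotientGroup.mk_mul, ← QuotientGroup.mk_mul,
        Subgroup.mem_center_iff.mp hz w]
    have htop' : (⊤ : Subgroup ↥H) ≤ N' := by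
      rw [← perfect_top_of_perfect hperf]
      refine Subgroup.commutator_le.mpr fun a _ b _ => ?_
      rw [← QuotientGroup.eq_one_iff (N := N')]
      have : (QuotientGroup.mk ⁅a, b⁆ : ↥H ⧸ N') =
          ⁅(QuotientGroup.mk a : ↥H ⧸ N'), QuotientGroup.mk b⁆ :=
        map_commutatorElement (QuotientGroup.mk' N') a b
      rw [this]
      exact commutatorElement_eq_one_iff_commute.mpr (hcomm _ _)
    intro x hx
    have : (⟨x, hx⟩ : ↥H) ∈ N' := htop' (Subgroup.mem_top _)
    simpa only [hNdef, Subgroup.mem_subgroupOf] using this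

end Machinery2
section Machinery3

variable {G : Type*} [Group G]

lemma QS.wielandt {H : Subgroup G} (hq : QS H) :
    ∀ {T : Subgroup G}, SN H T → ∀ {N : Subgroup G}, IsNormalIn N T →
      H ≤ N ∨ ElCom H N := by
  intro T hsn
  induction hsn with
  | refl =>
      intro N hN
      rcases hq.cases' N hN with hc | hle
      · exact Or.inr hc.symm
      · exact Or.inl hle
  | @step B T hAB hBT ih =>
      intro N hN
      have hNB : IsNormalIn (N ⊓ B) B :=
        ⟨inf_le_right, fun b hb a ha =>
          ⟨hN.2 b (hBT.1 hb) a ha.1, hBT.2 b (hBT.1 hb) a ha.2⟩⟩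
      rcases ih hNB with hle | hcom
      · exact Or.inl (hle.trans inf_le_left)
      · -- three subgroups argument
        have hHB : H ≤ B := hAB.le
        have key : ⁅N, H⁆ ≤ N ⊓ B := by
          refine Subgroup.commutator_le.mpr fun n hn a ha => ?_
          constructor
          · have h1 : a * n⁻¹ * a⁻¹ ∈ N := hN.2 a (hBT.1 (hHB ha)) n⁻¹ (N.inv_mem hn)
            have : ⁅n, a⁆ = n * (a * n⁻¹ * a⁻¹) := by group
            rw [this]
            exact N.mul_mem hn h1
          · have h2 : n * a * n⁻¹ ∈ B := hBT.2 n (hN.1 hn) a (hHB ha)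
            have : ⁅n, a⁆ = (n * a * n⁻¹) * a⁻¹ := by group
            rw [this]
            exact B.mul_mem h2 (B.inv_mem (hHB ha))
        have hbot : ⁅N ⊓ B, H⁆ = ⊥ := by
          have : ElCom (N ⊓ B) H := fun x hx a ha => (hcom a ha x hx).symm
          exact this.commutator_eq_bot
        have h1 : ⁅⁅H, N⁆, H⁆ = ⊥ := by
          rw [Subgroup.commutator_comm H N]
          exact le_bot_iff.mp ((Subgroup.commutator_mono key le_rfl).trans hbot.le)
        have h2 : ⁅⁅N, H⁆, H⁆ = ⊥ :=
          le_bot_iff.mp ((Subgroup.commutator_mono key le_rfl).trans hbot.le)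
        have h3 : ⁅⁅H, H⁆, N⁆ = ⊥ :=
          Subgroup.commutator_commutator_eq_bot_of_rotate h1 h2
        rw [hq.perfect] at h3
        exact Or.inr (elCom_of_commutator_eq_bot h3)

lemma QS.ks {H : Subgroup G} (hq : QS H) :
    ∀ {N T : Subgroup G}, SN N T → SN H T → H ≤ N ∨ ElCom H N := by
  intro N T hNT
  induction hNT with
  | refl => intro hHT; exact Or.inl hHT.le
  | @step B T' hNB hBT ih =>
      intro hHT
      rcases hq.wielandt hHT hBT with hle | hcom
      · have hsnHB : SN H B := by
          have := hHT.inf B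
          rwa [inf_eq_left.mpr hle, inf_eq_right.mpr hBT.1] at this
        exact ih hsnHB
      · exact Or.inr (hcom.mono le_rfl hNB.le)

lemma QS.eq_of_sn {K : Subgroup G} (hK : QS K) :
    ∀ {L : Subgroup G}, SN K L → QS L → K = L := by
  intro L hKL
  induction hKL with
  | refl => intro _; rfl
  | @step B L hKB hBL ih =>
      intro hL
      rcases hL.cases' B hBL with hcom | hle
      · exact absurd (hcom.mono hKB.le (hKB.le.trans hBL.1)) (fun h => (hK.not_elcom_self h).elim)
      · have hBeq : B = L := le_antisymm hBL.1 hle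
        exact (ih (hBeq ▸ hL)).trans hBeq

lemma comm_of_ne {H L : Subgroup G} (hH : QS H) (hL : QS L)
    (hHs : SN H (⊤ : Subgroup G)) (hLs : SN L (⊤ : Subgroup G)) (hne : H ≠ L) : ElCom H L := by
  rcases hH.ks hLs hHs with hle | hcom
  · exfalso
    apply hne
    have hsnHL : SN H L := by
      have := hHs.inf L
      rwa [inf_eq_left.mpr hle, top_inf_eq] at this
    exact hH.eq_of_sn hsnHL hL
  · exact hcom

end Machinery3
section Machinery4

variable {G : Type*} [Group G]

/-- Trivial "center" predicate, elementwise. -/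
def Centerless (H : Subgroup G) : Prop := ∀ x ∈ H, (∀ y ∈ H, x * y = y * x) → x = 1

lemma IsNormalIn.map_equiv (e : G ≃* G) {A B : Subgroup G} (h : IsNormalIn A B) :
    IsNormalIn (A.map e.toMonoidHom) (B.map e.toMonoidHom) := by
  constructor
  · exact Subgroup.map_mono h.1
  · intro b hb a ha
    rw [Subgroup.mem_map_equiv] at hb ha ⊢
    rw [map_mul, map_mul, map_inv]
    exact h.2 _ hb _ ha

lemma SN.map_equiv (e : G ≃* G) {A B : Subgroup G} (h : SN A B) :
    SN (A.map e.toMonoidHom) (B.map e.toMonoidHom) := by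
  induction h with
  | refl => exact SN.refl _
  | step h hn ih => exact SN.step ih (hn.map_equiv e)

lemma SN.map_equiv_top (e : G ≃* G) {A : Subgroup G} (h : SN A (⊤ : Subgroup G)) :
    SN (A.map e.toMonoidHom) (⊤ : Subgroup G) := by
  have := h.map_equiv e
  rwa [Subgroup.map_top_of_surjective _ e.surjective] at this

lemma QS.map_equiv (e : G ≃* G) {H : Subgroup G} (hq : QS H) : QS (H.map e.toMonoidHom) := by
  refine ⟨?_, ?_, ?_⟩
  · intro hbot
    apply hq.ne_bot
    have := (Subgroup.map_eq_bot_iff _).mp hbot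
    rwa [(MonoidHom.ker_eq_bot_iff _).mpr e.injective, le_bot_iff] at this
  · rw [← Subgroup.map_commutator, hq.perfect]
  · intro N hN
    set N₀ := N.map e.symm.toMonoidHom with hN₀
    have hmem : ∀ x : G, x ∈ N₀ ↔ e x ∈ N := by
      intro x; rw [hN₀, Subgroup.mem_map_equiv, MulEquiv.symm_symm]
    have hmemH : ∀ x : G, x ∈ H.map e.toMonoidHom ↔ e.symm x ∈ H := fun x =>
      Subgroup.mem_map_equiv
    have hN₀n : IsNormalIn N₀ H := by
      constructor
      · intro x hx
        have h1 : e x ∈ N := (hmem x).mp hx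
        have h2 : e x ∈ H.map e.toMonoidHom := hN.1 h1
        have h3 := (hmemH _).mp h2
        rwa [MulEquiv.symm_apply_apply] at h3
      · intro b hb a ha
        rw [hmem] at ha ⊢
        rw [map_mul, map_mul, map_inv]
        exact hN.2 _ (Subgroup.mem_map_of_mem _ hb) _ ha
    rcases hq.cases' N₀ hN₀n with hcom | hle
    · left
      intro n hn y hy
      have h1 : e.symm n ∈ N₀ := by rw [hmem, MulEquiv.apply_symm_apply]; exact hn
      have h2 : e.symm y ∈ H := (hmemH y).mp hy
      have h3 := congrArg e (hcom _ h1 _ h2)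
      simpa [map_mul] using h3
    · right
      intro x hx
      have h2 : e.symm x ∈ H := (hmemH x).mp hx
      have h3 : e.symm x ∈ N₀ := hle h2
      rw [hmem, MulEquiv.apply_symm_apply] at h3
      exact h3

lemma Centerless.map_equiv (e : G ≃* G) {H : Subgroup G} (h : Centerless H) :
    Centerless (H.map e.toMonoidHom) := by
  intro x hx hcomm
  have hx' : e.symm x ∈ H := Subgroup.mem_map_equiv.mp hx
  have h1 : e.symm x = 1 := by
    refine h _ hx' fun y hy => ?_
    have hyH : e y ∈ H.map e.toMonoidHom := Subgroup.mem_map_of_mem _ hy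
    have h2 := congrArg e.symm (hcomm _ hyH)
    simpa [map_mul] using h2
  have h3 := congrArg e h1
  simpa using h3

end Machinery4
section Machinery5

variable {G : Type*} [Group G]

lemma Subgroup.exists_ne_one_of_ne_bot {A : Subgroup G} (h : A ≠ ⊥) : ∃ x ∈ A, x ≠ 1 := by
  by_contra hc
  push_neg at hc
  exact h ((Subgroup.eq_bot_iff_forall A).mpr hc)

lemma normal_inf' {A B : Subgroup G} (hA : A.Normal) (hB : B.Normal) : (A ⊓ B).Normal :=
  ⟨fun x hx g => ⟨hA.conj_mem x hx.1 g, hB.conj_mem x hx.2 g⟩⟩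

lemma normal_centralizer {M : Subgroup G} (hMn : M.Normal) :
    (Subgroup.centralizer (M : Set G)).Normal := by
  constructor
  intro c hc g
  rw [Subgroup.mem_centralizer_iff]
  intro m hm
  have hm' : g⁻¹ * m * g ∈ M := by
    have := hMn.conj_mem m hm g⁻¹
    simpa using this
  have h1 : (g⁻¹ * m * g) * c = c * (g⁻¹ * m * g) :=
    Subgroup.mem_centralizer_iff.mp hc _ hm'
  have key : m * (g * c * g⁻¹) = g * ((g⁻¹ * m * g) * c) * g⁻¹ := by group
  rw [key, h1]
  group

lemma nilpotent_normal_exists_central {K : Type*} [Group K] (hnil : Group.IsNilpotent K)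
    {N : Subgroup K} (hNn : N.Normal) (hne : N ≠ ⊥) :
    ∃ x ∈ N, x ≠ 1 ∧ ∀ y : K, x * y = y * x := by
  obtain ⟨n, hn⟩ := hnil.nilpotent'
  have hex : ∃ k, N ⊓ Subgroup.upperCentralSeries K k ≠ ⊥ :=
    ⟨n, by rw [hn, inf_top_eq]; exact hne⟩
  classical
  have hk : N ⊓ Subgroup.upperCentralSeries K (Nat.find hex) ≠ ⊥ := Nat.find_spec hex
  have hk0 : Nat.find hex ≠ 0 := by
    intro h0
    apply hk
    rw [h0, Subgroup.upperCentralSeries_zero, inf_bot_eq]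
  obtain ⟨m, hm⟩ := Nat.exists_eq_succ_of_ne_zero hk0
  have hprev : N ⊓ Subgroup.upperCentralSeries K m = ⊥ := by
    by_contra hne'
    have := Nat.find_min hex (m := m) (by omega)
    exact this hne'
  rw [hm] at hk
  obtain ⟨x, hx, hx1⟩ := Subgroup.exists_ne_one_of_ne_bot hk
  refine ⟨x, hx.1, hx1, fun y => ?_⟩
  have h1 : x * y * x⁻¹ * y⁻¹ ∈ Subgroup.upperCentralSeries K m :=
    Subgroup.mem_upperCentralSeries_succ_iff.mp hx.2 y
  have h2 : x * y * x⁻¹ * y⁻¹ ∈ N := by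
    have hy : y * x⁻¹ * y⁻¹ ∈ N := by
      have := hNn.conj_mem x⁻¹ (N.inv_mem hx.1) y
      simpa [mul_assoc] using this
    have : x * y * x⁻¹ * y⁻¹ = x * (y * x⁻¹ * y⁻¹) := by group
    rw [this]
    exact N.mul_mem hx.1 hy
  have h3 : x * y * x⁻¹ * y⁻¹ = 1 := by
    have : x * y * x⁻¹ * y⁻¹ ∈ N ⊓ Subgroup.upperCentralSeries K m := ⟨h2, h1⟩
    rwa [hprev, Subgroup.mem_bot] at this
  have := commutatorElement_eq_one_iff_commute.mp (by simpa [commutatorElement_def] using h3)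
  exact this

lemma minNormal_abelian (hFS : fittingSubgroup G = socle G)
    {M : Subgroup G} (hMn : M.Normal) (hMne : M ≠ ⊥)
    (hmin : ∀ M' : Subgroup G, M'.Normal → M' ≤ M → M' = ⊥ ∨ M' = M) :
    ∀ a ∈ M, ∀ b ∈ M, a * b = b * a := by
  set C := Subgroup.centralizer (M : Set G) with hC
  have hCn : C.Normal := normal_centralizer hMn
  have hZn : (M ⊓ C).Normal := normal_inf' hMn hCn
  rcases hmin (M ⊓ C) hZn inf_le_left with hbot | heq
  · exfalso
    have hfit : fittingSubgroup G ≤ C := by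
      refine iSup₂_le fun Ni hNi => ?_
      obtain ⟨hNin, hNinil⟩ := hNi
      by_cases hMNi : M ≤ Ni
      · exfalso
        haveI := hNin
        set M' : Subgroup ↥Ni := M.subgroupOf Ni with hM'
        have hM'n : M'.Normal := by
          constructor
          rintro ⟨m, hmNi⟩ hmem ⟨g, hgNi⟩
          simp only [hM', Subgroup.mem_subgroupOf] at hmem ⊢
          exact hMn.conj_mem m hmem g
        have hM'ne : M' ≠ ⊥ := by
          obtain ⟨x, hxM, hx1⟩ := Subgroup.exists_ne_one_of_ne_bot hMne
          intro hbot'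
          have : (⟨x, hMNi hxM⟩ : ↥Ni) ∈ M' := by
            simp only [hM', Subgroup.mem_subgroupOf]; exact hxM
          rw [hbot', Subgroup.mem_bot] at this
          exact hx1 (by simpa using congrArg Subtype.val this)
        obtain ⟨y, hyM', hy1, hycen⟩ := nilpotent_normal_exists_central hNinil hM'n hM'ne
        have hyM : (y : G) ∈ M := by
          simpa only [hM', Subgroup.mem_subgroupOf] using hyM'
        have hyC : (y : G) ∈ C := by
          rw [hC, Subgroup.mem_centralizer_iff]
          intro m hm
          have := hycen ⟨m, hMNi hm⟩
          have := congrArg Subtype.val this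
          simpa using this.symm
        have : (y : G) ∈ M ⊓ C := ⟨hyM, hyC⟩
        rw [hbot, Subgroup.mem_bot] at this
        apply hy1
        exact Subtype.ext this
      · have hinf : Ni ⊓ M = ⊥ := by
          rcases hmin (Ni ⊓ M) (normal_inf' hNin hMn) inf_le_right with h | h
          · exact h
          · exact absurd (h ▸ inf_le_left) hMNi
        intro x hx
        rw [Subgroup.mem_centralizer_iff]
        intro m hm
        have hcom : x * m * x⁻¹ * m⁻¹ ∈ Ni ⊓ M := by
          constructor
          · have h1 : m * x⁻¹ * m⁻¹ ∈ Ni := by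
              have := hNin.conj_mem x⁻¹ (Ni.inv_mem hx) m
              simpa [mul_assoc] using this
            have : x * m * x⁻¹ * m⁻¹ = x * (m * x⁻¹ * m⁻¹) := by group
            rw [this]; exact Ni.mul_mem hx h1
          · have h1 : x * m * x⁻¹ ∈ M := hMn.conj_mem m hm x
            exact M.mul_mem h1 (M.inv_mem hm)
        rw [hinf, Subgroup.mem_bot] at hcom
        have := commutatorElement_eq_one_iff_commute.mp
          (by simpa [commutatorElement_def] using hcom)
        exact this.symm
    have hMsoc : M ≤ socle G := by
      have hmem : M ∈ {N : Subgroup G | N.Normal ∧ N ≠ ⊥ ∧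
          ∀ M' : Subgroup G, M'.Normal → M' ≤ N → M' = ⊥ ∨ M' = N} := ⟨hMn, hMne, hmin⟩
      exact le_iSup₂ (f := fun (N : Subgroup G) (_ : N ∈ _) => N) M hmem
    have : M ≤ M ⊓ C := le_inf le_rfl (hMsoc.trans (hFS ▸ hfit))
    rw [hbot, le_bot_iff] at this
    exact hMne this
  · intro a ha b hb
    have hMC : M ≤ C := heq ▸ inf_le_right
    exact Subgroup.mem_centralizer_iff.mp (hMC hb) a ha
lemma minNormal_isPGroup {p : ℕ} (hp : p.Prime) [Finite G]
    (hOp' : ∀ N : Subgroup G, N.Normal → ¬ p ∣ Nat.card N → N = ⊥)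
    (hFS : fittingSubgroup G = socle G)
    {M : Subgroup G} (hMn : M.Normal) (hMne : M ≠ ⊥)
    (hmin : ∀ M' : Subgroup G, M'.Normal → M' ≤ M → M' = ⊥ ∨ M' = M) :
    IsPGroup p ↥M := by
  have habel := minNormal_abelian hFS hMn hMne hmin
  have hpdvd : p ∣ Nat.card ↥M := by
    by_contra h
    exact hMne (hOp' M hMn h)
  haveI := Fact.mk hp
  haveI : Fintype ↥M := Fintype.ofFinite _
  obtain ⟨x, hx⟩ := exists_prime_orderOf_dvd_card (G := ↥M) p
    (by rwa [← Nat.card_eq_fintype_card])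
  set K : Subgroup G :=
    { carrier := {g | g ∈ M ∧ g ^ p = 1}
      one_mem' := ⟨M.one_mem, one_pow p⟩
      mul_mem' := by
        rintro a b ⟨haM, hap⟩ ⟨hbM, hbp⟩
        refine ⟨M.mul_mem haM hbM, ?_⟩
        have hcom : Commute a b := habel a haM b hbM
        rw [hcom.mul_pow, hap, hbp, one_mul]
      inv_mem' := by
        rintro a ⟨haM, hap⟩
        exact ⟨M.inv_mem haM, by rw [inv_pow, hap, inv_one]⟩ } with hK
  have hKn : K.Normal := by
    constructor
    rintro a ⟨haM, hap⟩ g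
    refine ⟨hMn.conj_mem a haM g, ?_⟩
    have h1 : ((MulAut.conj g) a) ^ p = (MulAut.conj g) (a ^ p) := (map_pow _ _ _).symm
    simp only [MulAut.conj_apply] at h1
    rw [h1, hap]
    group
  have hKM : K ≤ M := fun g hg => hg.1
  have hKne : K ≠ ⊥ := by
    intro hbot
    have hxK : (x : G) ∈ K := by
      refine ⟨x.2, ?_⟩
      have h1 : x ^ p = 1 := by rw [← hx]; exact pow_orderOf_eq_one x
      have := congrArg Subtype.val h1
      simpa using this
    rw [hbot, Subgroup.mem_bot] at hxK
    have : x = 1 := Subtype.ext hxK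
    rw [this, orderOf_one] at hx
    exact hp.one_lt.ne' hx.symm 
  rcases hmin K hKn hKM with hbot | heq
  · exact absurd hbot hKne
  · intro y
    refine ⟨1, ?_⟩
    have hyK : (y : G) ∈ K := heq.symm ▸ y.2
    have := hyK.2
    rw [pow_one]
    exact Subtype.ext (by simpa using this)

lemma socle_isPGroup {p : ℕ} (hp : p.Prime) [Finite G]
    (hOp' : ∀ N : Subgroup G, N.Normal → ¬ p ∣ Nat.card N → N = ⊥)
    (hFS : fittingSubgroup G = socle G) :
    IsPGroup p ↥(socle G) := by
  haveI : Finite (Subgroup G) :=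
    Finite.of_injective (fun H => (H : Set G)) SetLike.coe_injective
  set S : Set (Subgroup G) := {W | W.Normal ∧ IsPGroup p ↥W} with hS
  have hSne : S.Nonempty := ⟨⊥, inferInstance, IsPGroup.of_bot⟩
  obtain ⟨W, hWS, hWmax⟩ := Set.Finite.exists_maximalFor id S (Set.toFinite S) hSne
  have hsoc : socle G ≤ W := by
    refine iSup₂_le fun M hM => ?_
    obtain ⟨hMn, hMne, hmin⟩ := hM
    have hMp : IsPGroup p ↥M := minNormal_isPGroup hp hOp' hFS hMn hMne hmin
    haveI := hMn
    haveI := hWS.1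
    have hsupP : IsPGroup p ↥(M ⊔ W) := IsPGroup.to_sup_of_normal_right hMp hWS.2
    have hsupS : M ⊔ W ∈ S := ⟨inferInstance, hsupP⟩
    have := hWmax hsupS le_sup_right
    simp only [id_eq] at this
    have hMW : M ≤ W := by
      exact le_sup_left.trans this
    exact hMW
  exact hWS.2.to_le hsoc

lemma exists_minNormal_le [Finite G] {N : Subgroup G} (hN : N.Normal) (hne : N ≠ ⊥) :
    ∃ M : Subgroup G, M.Normal ∧ M ≠ ⊥ ∧ M ≤ N ∧
      ∀ M' : Subgroup G, M'.Normal → M' ≤ M → M' = ⊥ ∨ M' = M := by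
  haveI : Finite (Subgroup G) :=
    Finite.of_injective (fun H => (H : Set G)) SetLike.coe_injective
  set A : Set (Subgroup G) := {R | R.Normal ∧ R ≠ ⊥ ∧ R ≤ N} with hA
  have hAne : A.Nonempty := ⟨N, hN, hne, le_rfl⟩
  obtain ⟨M, hMA, hMmin⟩ := Set.Finite.exists_minimalFor id A (Set.toFinite A) hAne
  refine ⟨M, hMA.1, hMA.2.1, hMA.2.2, fun M' hM'n hM'le => ?_⟩
  by_cases h : M' = ⊥
  · exact Or.inl h
  · right
    have : M' ∈ A := ⟨hM'n, h, hM'le.trans hMA.2.2⟩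
    have := hMmin this hM'le
    simp only [id_eq] at this
    exact le_antisymm hM'le this
lemma mem_mul_decomp {B C : Subgroup G} (hcom : ∀ c ∈ C, ∀ b ∈ B, c * b = b * c)
    {z : G} (hz : z ∈ B ⊔ C) : ∃ b ∈ B, ∃ c ∈ C, z = b * c := by
  set T : Subgroup G :=
    { carrier := {x | ∃ b ∈ B, ∃ c ∈ C, x = b * c}
      one_mem' := ⟨1, B.one_mem, 1, C.one_mem, (one_mul 1).symm⟩
      mul_mem' := by
        rintro x y ⟨b1, hb1, c1, hc1, rfl⟩ ⟨b2, hb2, c2, hc2, rfl⟩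
        refine ⟨b1 * b2, B.mul_mem hb1 hb2, c1 * c2, C.mul_mem hc1 hc2, ?_⟩
        have h := hcom c1 hc1 b2 hb2
        calc b1 * c1 * (b2 * c2) = b1 * (c1 * b2) * c2 := by group
        _ = b1 * (b2 * c1) * c2 := by rw [h]
        _ = b1 * b2 * (c1 * c2) := by group
      inv_mem' := by
        rintro x ⟨b, hb, c, hc, rfl⟩
        refine ⟨b⁻¹, B.inv_mem hb, c⁻¹, C.inv_mem hc, ?_⟩
        have h := hcom c⁻¹ (C.inv_mem hc) b⁻¹ (B.inv_mem hb)
        rw [mul_inv_rev, h] } with hT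
  have hBT : B ≤ T := fun b hb => ⟨b, hb, 1, C.one_mem, (mul_one b).symm⟩
  have hCT : C ≤ T := fun c hc => ⟨1, B.one_mem, c, hc, (one_mul c).symm⟩
  exact (sup_le hBT hCT) hz

lemma cent_prod (T : Finset (Subgroup G))
    (hpair : ∀ A ∈ T, ∀ B ∈ T, A ≠ B → ElCom A B)
    (hcl : ∀ A ∈ T, Centerless A) :
    ∀ z ∈ T.sup id, (∀ A ∈ T, ∀ y ∈ A, z * y = y * z) → z = 1 := by
  classical
  induction T using Finset.induction_on with
  | empty => intro z hz _; simpa [Finset.sup_empty, Subgroup.mem_bot] using hz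
  | @insert A₀ T' hA₀ ih =>
      intro z hz hcom
      rw [Finset.sup_insert] at hz
      have hCsup : ∀ c ∈ T'.sup id, ∀ b ∈ A₀, c * b = b * c := by
        intro c hc b hb
        have hle : T'.sup id ≤ Subgroup.centralizer (A₀ : Set G) := by
          refine Finset.sup_le fun B hB => ?_
          intro x hx
          refine Subgroup.mem_centralizer_iff.mpr fun y hy => ?_
          have hne : B ≠ A₀ := fun h => hA₀ (h ▸ hB)
          exact (hpair B (Finset.mem_insert_of_mem hB) A₀ (Finset.mem_insert_self _ _) hne
            x hx y hy).symm
        exact (Subgroup.mem_centralizer_iff.mp (hle hc) b hb).symm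
      obtain ⟨b, hb, c, hc, rfl⟩ := mem_mul_decomp hCsup hz
      have hb1 : b = 1 := by
        refine hcl A₀ (Finset.mem_insert_self _ _) b hb fun y hy => ?_
        have h1 := hcom A₀ (Finset.mem_insert_self _ _) y hy
        have h2 := hCsup c hc y hy
        have h3 : b * y * c = y * b * c := by
          calc b * y * c = b * (y * c) := by group
          _ = b * (c * y) := by rw [← h2]
          _ = b * c * y := by group
          _ = y * (b * c) := h1
          _ = y * b * c := by group
        exact mul_right_cancel h3
      rw [hb1, one_mul]
      refine ih (fun A hA B hB hne => hpair _ (Finset.mem_insert_of_mem hA) _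
          (Finset.mem_insert_of_mem hB) hne)
        (fun A hA => hcl _ (Finset.mem_insert_of_mem hA)) c hc (fun A hA y hy => ?_)
      have h1 := hcom A (Finset.mem_insert_of_mem hA) y hy
      rw [hb1, one_mul] at h1
      exact h1

lemma no_centerless_component [Finite G]
    (hFS : fittingSubgroup G = socle G)
    {H : Subgroup G} (hsn : SN H (⊤ : Subgroup G)) (hq : QS H) (hcl : Centerless H) :
    False := by
  classical
  haveI : Finite (Subgroup G) :=
    Finite.of_injective (fun K => (K : Set G)) SetLike.coe_injective
  set N := Subgroup.normalClosure (H : Set G) with hN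
  have hNnormal : N.Normal := Subgroup.normalClosure_normal
  have hHN : H ≤ N := fun x hx => Subgroup.subset_normalClosure hx
  have hNne : N ≠ ⊥ := by
    intro h
    apply hq.ne_bot
    rw [← le_bot_iff]
    exact h ▸ hHN
  obtain ⟨M, hMn, hMne, hMleN, hmin⟩ := exists_minNormal_le hNnormal hNne
  have habel := minNormal_abelian hFS hMn hMne hmin
  set S : Set (Subgroup G) := Set.range (fun g => H.map (MulAut.conj g).toMonoidHom) with hS
  set T : Finset (Subgroup G) := (Set.toFinite S).toFinset with hT
  have hmemT : ∀ L, L ∈ T ↔ ∃ g : G, H.map (MulAut.conj g).toMonoidHom = L := by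
    intro L
    rw [hT, Set.Finite.mem_toFinset, hS]
    exact Set.mem_range
  have hQS : ∀ L ∈ T, QS L ∧ SN L (⊤ : Subgroup G) ∧ Centerless L := by
    intro L hL
    obtain ⟨g, rfl⟩ := (hmemT L).mp hL
    exact ⟨hq.map_equiv _, hsn.map_equiv_top _, hcl.map_equiv _⟩
  have hpairT : ∀ A ∈ T, ∀ B ∈ T, A ≠ B → ElCom A B := fun A hA B hB hne =>
    comm_of_ne (hQS A hA).1 (hQS B hB).1 (hQS A hA).2.1 (hQS B hB).2.1 hne
  have hMcomm : ∀ L ∈ T, ∀ m ∈ M, ∀ y ∈ L, m * y = y * m := by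
    intro L hL m hm y hy
    have hMnorm : IsNormalIn M (⊤ : Subgroup G) :=
      ⟨le_top, fun b _ a ha => hMn.conj_mem a ha b⟩
    rcases (hQS L hL).1.wielandt (hQS L hL).2.1 hMnorm with hle | hcom
    · exfalso
      apply (hQS L hL).1.not_elcom_self
      intro a ha b hb
      exact habel a (hle ha) b (hle hb)
    · exact (hcom y hy m hm).symm
  have hNle : N ≤ T.sup id := by
    rw [hN]
    show Subgroup.closure (Group.conjugatesOfSet (H : Set G)) ≤ T.sup id
    refine (Subgroup.closure_le _).mpr ?_
    intro x hx
    obtain ⟨a, haH, hconj⟩ := Group.mem_conjugatesOfSet_iff.mp hx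
    obtain ⟨c, hc⟩ := isConj_iff.1 hconj
    have hxL : x ∈ H.map (MulAut.conj c).toMonoidHom :=
      ⟨a, haH, by simpa [MulAut.conj_apply] using hc⟩
    have hLT : H.map (MulAut.conj c).toMonoidHom ∈ T := (hmemT _).mpr ⟨c, rfl⟩
    exact SetLike.mem_coe.mpr ((Finset.le_sup (f := id) hLT) hxL)
  obtain ⟨m, hmM, hm1⟩ := Subgroup.exists_ne_one_of_ne_bot hMne
  apply hm1
  exact cent_prod T hpairT (fun A hA => (hQS A hA).2.2) m (hNle (hMleN hmM))
    (fun A hA y hy => hMcomm A hA m hmM y hy)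
lemma perfect_hom_eq_one {K : Type*} [Group K]
    (hperf : ⁅(⊤ : Subgroup K), (⊤ : Subgroup K)⁆ = (⊤ : Subgroup K))
    {A : Type*} [CommGroup A] (ϕ : K →* A) (x : K) : ϕ x = 1 := by
  have hx : x ∈ ⁅(⊤ : Subgroup K), (⊤ : Subgroup K)⁆ := by rw [hperf]; trivial
  have hle : ⁅(⊤ : Subgroup K), (⊤ : Subgroup K)⁆ ≤ ϕ.ker :=
    Subgroup.commutator_le.mpr fun a _ b _ => by
      rw [MonoidHom.mem_ker, map_commutatorElement]
      exact commutatorElement_eq_one_iff_commute.mpr (mul_comm _ _)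
  exact hle hx

lemma center_eq_bot_aux {p : ℕ} (hp : p.Prime) {K : Type*} [Group K]
    (hZp : IsPGroup p (Subgroup.center K))
    {n : ℕ} (hn : ¬ p ∣ n) (hpow : ∀ z ∈ Subgroup.center K, z ^ n = 1) :
    Subgroup.center K = ⊥ := by
  rw [Subgroup.eq_bot_iff_forall]
  intro z hz
  obtain ⟨k, hk⟩ := hZp ⟨z, hz⟩
  have h1 : z ^ (p ^ k) = 1 := by
    have := congrArg Subtype.val hk
    simpa using this
  have h2 : orderOf z ∣ p ^ k := orderOf_dvd_of_pow_eq_one h1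
  have h3 : orderOf z ∣ n := orderOf_dvd_of_pow_eq_one (hpow z hz)
  obtain ⟨j, hj, hje⟩ := (Nat.dvd_prime_pow hp).mp h2
  rcases Nat.eq_zero_or_pos j with h0 | hpos
  · rw [h0, pow_zero] at hje
    exact orderOf_eq_one_iff.mp hje
  · exfalso
    apply hn
    have hd1 : p ∣ p ^ j := dvd_pow_self p hpos.ne'
    exact hd1.trans (hje ▸ h3)

lemma centerless_of_center_eq_bot {H : Subgroup G} (h : Subgroup.center ↥H = ⊥) :
    Centerless H := by
  intro x hx hcomm
  have hmem : (⟨x, hx⟩ : ↥H) ∈ Subgroup.center ↥H :=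
    Subgroup.mem_center_iff.mpr fun g => Subtype.ext (by
      simpa using (hcomm g.1 g.2).symm)
  rw [h, Subgroup.mem_bot] at hmem
  simpa using congrArg Subtype.val hmem

end Machinery5

theorem stmt8 {p : ℕ} (hp : p.Prime) {G : Type*} [Group G] [Finite G]
    (hOp' : ∀ N : Subgroup G, N.Normal → ¬ p ∣ Nat.card N → N = ⊥)
    (hE : ∃ H : Subgroup G, IsComponent H)
    (hFS : fittingSubgroup G = socle G) :
    ∀ H : Subgroup G, IsComponent H →
      p ∣ Nat.card (↥H ⧸ Subgroup.center ↥H) ∧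
      ∀ Q : Sylow p (↥H ⧸ Subgroup.center ↥H), ¬ IsCyclic ↥(Q : Subgroup (↥H ⧸ Subgroup.center ↥H)) := by
  intro H hcomp
  obtain ⟨hsub, hquasi⟩ := hcomp
  have hq : QS H := hquasi.qs
  have hsn : SN H (⊤ : Subgroup G) := hsub.sn
  set Z := Subgroup.center ↥H with hZdef
  -- Step A : Z is a p-group
  have hZp : IsPGroup p ↥Z := by
    set Zg := Z.map H.subtype with hZg
    set Nn := Subgroup.normalClosure (H : Set G) with hNn
    have hNnormal : Nn.Normal := Subgroup.normalClosure_normal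
    have hZgH : Zg ≤ H := Subgroup.map_subtype_le Z
    have hZgNn : Zg ≤ Nn := hZgH.trans (fun x hx => Subgroup.subset_normalClosure hx)
    have hNnCent : Nn ≤ Subgroup.centralizer (Zg : Set G) := by
      rw [hNn]
      show Subgroup.closure (Group.conjugatesOfSet (H : Set G)) ≤ _
      refine (Subgroup.closure_le _).mpr ?_
      intro x hx
      obtain ⟨a, haH, hconj⟩ := Group.mem_conjugatesOfSet_iff.mp hx
      obtain ⟨c, hc⟩ := isConj_iff.1 hconj
      have hxL : x ∈ H.map (MulAut.conj c).toMonoidHom :=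
        ⟨a, haH, by simpa [MulAut.conj_apply] using hc⟩
      refine SetLike.mem_coe.mpr (Subgroup.mem_centralizer_iff.mpr fun z hz => ?_)
      by_cases hLe : H.map (MulAut.conj c).toMonoidHom = H
      · rw [hLe] at hxL
        obtain ⟨z', hz', rfl⟩ := hz
        have := Subgroup.mem_center_iff.mp hz' ⟨x, hxL⟩
        have := congrArg Subtype.val this
        simpa using this.symm
      · have hcomHL : ElCom H (H.map (MulAut.conj c).toMonoidHom) :=
          comm_of_ne hq (hq.map_equiv _) hsn (hsn.map_equiv_top _) (Ne.symm hLe)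
        exact hcomHL z (hZgH hz) x hxL
    have hZgCent : Zg ≤ Nn ⊓ Subgroup.centralizer (Nn : Set G) := by
      refine le_inf hZgNn fun z hz => Subgroup.mem_centralizer_iff.mpr fun n hn => ?_
      exact (Subgroup.mem_centralizer_iff.mp (hNnCent hn) z hz).symm
    set Zc := Nn ⊓ Subgroup.centralizer (Nn : Set G) with hZc
    have hZcn : Zc.Normal := normal_inf' hNnormal (normal_centralizer hNnormal)
    have hZcnil : Group.IsNilpotent ↥Zc := by
      constructor
      refine ⟨1, ?_⟩
      rw [Subgroup.upperCentralSeries_one]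
      rw [eq_top_iff]
      intro x _
      refine Subgroup.mem_center_iff.mpr fun g => Subtype.ext ?_
      exact Subgroup.mem_centralizer_iff.mp x.2.2 g.1 g.2.1
    have hZcfit : Zc ≤ fittingSubgroup G := by
      have hmem : Zc ∈ {N : Subgroup G | N.Normal ∧ Group.IsNilpotent ↥N} := ⟨hZcn, hZcnil⟩
      exact le_iSup₂ (f := fun (N : Subgroup G) (_ : N ∈ _) => N) Zc hmem
    have hsocp : IsPGroup p ↥(socle G) := socle_isPGroup hp hOp' hFS
    have hZgp : IsPGroup p ↥Zg := hsocp.to_le ((hZgCent.trans hZcfit).trans_eq hFS)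
    exact hZgp.of_equiv (Subgroup.equivMapOfInjective Z H.subtype H.subtype_injective).symm
  have hperfK : ⁅(⊤ : Subgroup ↥H), (⊤ : Subgroup ↥H)⁆ = (⊤ : Subgroup ↥H) :=
    perfect_top_of_perfect hq.perfect
  haveI : Fact p.Prime := Fact.mk hp
  haveI : Z.FiniteIndex := ⟨Nat.card_pos.ne'⟩
  constructor
  · -- p divides |H/Z(H)|
    by_contra hpd
    have hpind : ¬ p ∣ Z.index := by rwa [Subgroup.index_eq_card]
    have hpow : ∀ z ∈ Z, z ^ Z.index = 1 := by
      intro z hz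
      have h1 := MonoidHom.transfer_center_eq_pow (G := ↥H) z
      have h2 := perfect_hom_eq_one hperfK (MonoidHom.transfer (MonoidHom.id Z)) z
      rw [h1] at h2
      simpa using congrArg Subtype.val h2
    have hZbot : Z = ⊥ := center_eq_bot_aux hp hZp hpind hpow
    exact (no_centerless_component hFS hsn hq (centerless_of_center_eq_bot hZbot)).elim
  · intro Q hcyc
    haveI : Finite (Sylow p (↥H ⧸ Z)) :=
      Finite.of_injective (fun (P : Sylow p (↥H ⧸ Z)) => (P : Subgroup (↥H ⧸ Z)))
        (fun P R h => Sylow.ext h)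
    haveI : Finite (Sylow p ↥H) :=
      Finite.of_injective (fun (P : Sylow p ↥H) => (P : Subgroup ↥H))
        (fun P R h => Sylow.ext h)
    obtain ⟨P, hZP⟩ := hZp.exists_le_sylow
    set Pb := (P : Subgroup ↥H).map (QuotientGroup.mk' Z) with hPb
    have hPbp : IsPGroup p ↥Pb := P.2.map _
    obtain ⟨R, hPbR⟩ := hPbp.exists_le_sylow
    obtain ⟨g, hg⟩ := MulAction.exists_smul_eq (↥H ⧸ Z) Q R
    haveI hRcyc : IsCyclic ↥(R : Subgroup (↥H ⧸ Z)) := by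
      rw [← hg]
      have e2 := Subgroup.equivSMul (MulAut.conj g) (Q : Subgroup (↥H ⧸ Z))
      exact isCyclic_of_surjective e2.toMonoidHom e2.surjective
    haveI hPbcyc : IsCyclic ↥Pb := Subgroup.isCyclic_of_le hPbR
    set f := (QuotientGroup.mk' Z).comp (P : Subgroup ↥H).subtype with hf
    have hfrange : f.range = Pb := by
      rw [hf, MonoidHom.range_comp, Subgroup.range_subtype]
    haveI : IsCyclic ↥f.range := by rw [hfrange]; exact hPbcyc
    have hker : f.ker ≤ Subgroup.center ↥(P : Subgroup ↥H) := by
      intro x hx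
      have hxZ : (x : ↥H) ∈ Z := by
        have h1 : f x = 1 := hx
        rw [hf] at h1
        simpa using (QuotientGroup.eq_one_iff (x : ↥H)).mp h1
      refine Subgroup.mem_center_iff.mpr fun y => Subtype.ext ?_
      exact Subgroup.mem_center_iff.mp hxZ y.1
    have hcommP : ∀ a b : ↥(P : Subgroup ↥H), a * b = b * a :=
      commutative_of_cyclic_center_quotient f.rangeRestrict
        (by rwa [MonoidHom.ker_rangeRestrict])
    haveI : IsMulCommutative ↥(P : Subgroup ↥H) := ⟨⟨hcommP⟩⟩
    haveI : (P : Subgroup ↥H).FiniteIndex := ⟨Nat.card_pos.ne'⟩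
    have hpow : ∀ z ∈ Z, z ^ (P : Subgroup ↥H).index = 1 := by
      intro z hz
      have hkey : ∀ (k : ℕ) (g₀ : ↥H), g₀⁻¹ * z ^ k * g₀ ∈ (P : Subgroup ↥H) →
          g₀⁻¹ * z ^ k * g₀ = z ^ k := by
        intro k g₀ _
        have hzc : z ^ k ∈ Z := Z.pow_mem hz k
        have hcen := Subgroup.mem_center_iff.mp hzc g₀
        rw [mul_assoc, ← hcen, ← mul_assoc, inv_mul_cancel, one_mul]
      have h1 := MonoidHom.transfer_eq_pow (MonoidHom.id ↥(P : Subgroup ↥H)) z hkey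
      have h2 := perfect_hom_eq_one hperfK
        (MonoidHom.transfer (MonoidHom.id ↥(P : Subgroup ↥H))) z
      rw [h1] at h2
      simpa using congrArg Subtype.val h2
    have hZbot : Z = ⊥ := center_eq_bot_aux hp hZp (P.not_dvd_index) hpow
    exact (no_centerless_component hFS hsn hq (centerless_of_center_eq_bot hZbot)).elim
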